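/- Let n be a prime or the square of a prime, let v = ⌊√n⌋, and let (a,b) be a free side of dF_v. Then the set S(a,b;n) ∩ ℤ₊² is primitive; that is, every pair of positive integers (x, y) with ax + by = n satisfies gcd(x, y) = 1. (Note that any free side satisfies a + b > √n, and the conclusion holds for any coprime positive integers a, b with a + b > √n.) -/
import Mathlib


/-- `(a, b)` is a side of `dF_v`: `a, b` are coprime positive integers with `a, b ≤ v` and
`a + b > v` (i.e. `a, b` are the denominators of two consecutive fractions in the Farey
sequence of order `v`). -/
def IsSide (v a b : ℕ) : Prop :=
  0 < a ∧ 0 < b ∧ Nat.Coprime a b ∧ a ≤ v ∧ b ≤ v ∧ v < a + b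

/-- `(a, b)` is a free side of `dF_{⌊√n⌋}` with respect to `Γ₀(n)`: it is a side, `n` does not
divide `a² + ab + b²`, and `n` does not divide `ax + by` for any side `(x, y)`. -/
def IsFreeSide (n a b : ℕ) : Prop :=
  IsSide (Nat.sqrt n) a b ∧ ¬ n ∣ a ^ 2 + a * b + b ^ 2 ∧
    ∀ x y : ℕ, IsSide (Nat.sqrt n) x y → ¬ n ∣ a * x + b * y

/-- **Lemma.** If `n` is a prime or the square of a prime and `(a, b)` is a free side of
`dF_{⌊√n⌋}`, then the set `S(a, b; n) ∩ ℤ₊²` is primitive: every pair of positive integers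
`(x, y)` with `ax + by = n` satisfies `gcd(x, y) = 1`. -/
theorem stmt12 (n : ℕ) (hn : Nat.Prime n ∨ ∃ p : ℕ, Nat.Prime p ∧ n = p ^ 2)
    (a b : ℕ) (hab : IsFreeSide n a b) :
    ∀ x y : ℕ, 0 < x → 0 < y → a * x + b * y = n → Nat.Coprime x y := by
  intro x y hx hy hxy
  obtain ⟨⟨ha, hb, _, _, _, hvab⟩, -, -⟩ := hab
  have hdx : Nat.gcd x y ∣ x := Nat.gcd_dvd_left x y
  have hdy : Nat.gcd x y ∣ y := Nat.gcd_dvd_right x y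
  have hdn : Nat.gcd x y ∣ n := hxy ▸ Dvd.dvd.add (hdx.mul_left a) (hdy.mul_left b)
  -- if d = n, contradiction
  have hbig : Nat.gcd x y ≠ n ∨ n = 1 := by
    by_cases h1 : n = 1
    · exact Or.inr h1
    · left
      intro hdn'
      have hxn : n ≤ x := Nat.le_of_dvd hx (hdn' ▸ hdx)
      have hyn : 1 ≤ y := hy
      nlinarith
  rcases hn with hp | ⟨p, hp, rfl⟩
  · rcases (Nat.Prime.eq_one_or_self_of_dvd hp (Nat.gcd x y) hdn) with h | h
    · exact h
    · rcases hbig with h' | h'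
      · exact absurd h h'
      · exact absurd h' hp.ne_one
  · have hsq : Nat.sqrt (p ^ 2) = p := by
      simpa [pow_two] using Nat.sqrt_eq' p
    rw [hsq] at hvab
    obtain ⟨i, hi, hdi⟩ := (Nat.dvd_prime_pow hp).mp hdn
    rw [hdi] at hdx hdy hbig
    interval_cases i
    · simpa using hdi
    · -- d = p : write x = p x', y = p y'
      exfalso
      simp only [pow_one] at hdx hdy
      obtain ⟨x', rfl⟩ := hdx
      obtain ⟨y', rfl⟩ := hdy
      have hx' : 0 < x' := Nat.pos_of_mul_pos_left (by rwa [Nat.mul_comm] at hx)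
      have hy' : 0 < y' := Nat.pos_of_mul_pos_left (by rwa [Nat.mul_comm] at hy)
      have hpn : 0 < p := hp.pos
      have key : a * x' + b * y' = p := by
        have : p * (a * x' + b * y') = p * p := by ring_nf; ring_nf at hxy; nlinarith
        exact Nat.eq_of_mul_eq_mul_left hpn this
      nlinarith
    · rcases hbig with h' | h'
      · exact absurd rfl h'
      · exfalso; have := hp.two_le; nlinarith
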